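/- Let θ > 0, T > 0, α > 0, a > 0, b ≥ 0, and define g(n) = a/n + b/√n on (0, ∞) and h(n, γ) = 2θT e^{2θnT} + (α/γ) g′(n) 2^{g(n)} ln 2 for n, γ > 0. Then for every fixed γ > 0, the function n ↦ h(n, γ) is strictly increasing on (0, ∞). -/
import Mathlib


/-- The Lagrangian-stationarity function
`h(n, γ) = 2θT e^{2θnT} + (α/γ) g'(n) 2^{g(n)} ln 2`,
with `g(n) = a/n + b/√n` and `g'(n) = -a/n² - b/(2 n^{3/2})`,
is strictly increasing in `n` on `(0, ∞)` for every fixed `γ > 0`. -/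
theorem kkt_function_strictMono_in_n
    (θ T α a b : ℝ) (hθ : 0 < θ) (hT : 0 < T) (hα : 0 < α) (ha : 0 < a)
    (hb : 0 ≤ b) (γ : ℝ) (hγ : 0 < γ) :
    StrictMonoOn
      (fun n : ℝ => 2 * θ * T * Real.exp (2 * θ * n * T) +
        (α / γ) * (-(a / n ^ 2) - b / (2 * n ^ ((3 : ℝ) / 2))) *
          (2 : ℝ) ^ (a / n + b / Real.sqrt n) * Real.log 2)
      (Set.Ioi 0) := by
  intro x hx y hy hxy
  simp only [Set.mem_Ioi] at hx hy
  have hx2 : (0:ℝ) < x ^ 2 := by positivity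
  have hy2 : (0:ℝ) < y ^ 2 := by positivity
  have hx32 : (0:ℝ) < x ^ ((3:ℝ)/2) := Real.rpow_pos_of_pos hx _
  have hy32 : (0:ℝ) < y ^ ((3:ℝ)/2) := Real.rpow_pos_of_pos hy _
  -- first term strictly increases
  have h1 : 2 * θ * T * Real.exp (2 * θ * x * T) <
      2 * θ * T * Real.exp (2 * θ * y * T) := by
    have : Real.exp (2 * θ * x * T) < Real.exp (2 * θ * y * T) := by
      apply Real.exp_lt_exp.2
      nlinarith [mul_pos (mul_pos hθ hT) (sub_pos.2 hxy)]
    exact mul_lt_mul_of_pos_left this (by positivity)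
  -- G' values
  set Gx : ℝ := -(a / x ^ 2) - b / (2 * x ^ ((3:ℝ)/2)) with hGx
  set Gy : ℝ := -(a / y ^ 2) - b / (2 * y ^ ((3:ℝ)/2)) with hGy
  have hGyneg : Gy ≤ 0 := by
    have : 0 ≤ a / y ^ 2 := by positivity
    have : 0 ≤ b / (2 * y ^ ((3:ℝ)/2)) := by positivity
    rw [hGy]; nlinarith [div_pos ha hy2]
  have hGle : Gx ≤ Gy := by
    have h2 : a / y ^ 2 ≤ a / x ^ 2 :=
      div_le_div_of_nonneg_left ha.le hx2 (by nlinarith)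
    have h32 : x ^ ((3:ℝ)/2) ≤ y ^ ((3:ℝ)/2) :=
      Real.rpow_le_rpow hx.le hxy.le (by norm_num)
    have h3 : b / (2 * y ^ ((3:ℝ)/2)) ≤ b / (2 * x ^ ((3:ℝ)/2)) :=
      div_le_div_of_nonneg_left hb (by positivity) (by nlinarith)
    rw [hGx, hGy]; linarith
  -- 2^{g} values
  set Px : ℝ := (2:ℝ) ^ (a / x + b / Real.sqrt x) with hPx
  set Py : ℝ := (2:ℝ) ^ (a / y + b / Real.sqrt y) with hPy
  have hPxpos : 0 < Px := Real.rpow_pos_of_pos (by norm_num) _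
  have hPle : Py ≤ Px := by
    apply Real.rpow_le_rpow_left_iff (by norm_num : (1:ℝ) < 2) |>.2
    have hsx : 0 < Real.sqrt x := Real.sqrt_pos.2 hx
    have hsy : 0 < Real.sqrt y := Real.sqrt_pos.2 hy
    have h1' : a / y ≤ a / x := div_le_div_of_nonneg_left ha.le hx hxy.le
    have h2' : b / Real.sqrt y ≤ b / Real.sqrt x :=
      div_le_div_of_nonneg_left hb hsx (Real.sqrt_le_sqrt hxy.le)
    linarith
  -- second term weakly increases
  have h2 : (α / γ) * Gx * Px * Real.log 2 ≤ (α / γ) * Gy * Py * Real.log 2 := by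
    have step1 : Gx * Px ≤ Gy * Px := mul_le_mul_of_nonneg_right hGle hPxpos.le
    have step2 : Gy * Px ≤ Gy * Py := mul_le_mul_of_nonpos_left hPle hGyneg
    have : Gx * Px ≤ Gy * Py := le_trans step1 step2
    have hc : 0 < α / γ := by positivity
    have hl2 : 0 < Real.log 2 := Real.log_pos (by norm_num)
    calc (α / γ) * Gx * Px * Real.log 2 = ((α / γ) * Real.log 2) * (Gx * Px) := by ring
      _ ≤ ((α / γ) * Real.log 2) * (Gy * Py) :=
          mul_le_mul_of_nonneg_left this (by positivity)
      _ = (α / γ) * Gy * Py * Real.log 2 := by ring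
  simpa using add_lt_add_of_lt_of_le h1 h2
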